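/- Let 0 < η < 1/e. There exists a constant C > 0 such that for all real x, y with x ≠ y, the series ∑_{k=1}^∞ (sin(k x) − sin(k y)) / k² converges absolutely and | ∑_{k=1}^∞ (sin(k x) − sin(k y)) / k² | ≤ C·|x − y|·κ̃₁(|x − y|). -/

import Mathlib

open Real

/-- `κ̃₁(x) = log(1/x)` for `0 < x ≤ η`, and `κ̃₁(x) = log(1/η) − 1 + η/x` for `x > η`. -/
noncomputable def kappa1 (η x : ℝ) : ℝ :=
  if x ≤ η then Real.log (1 / x) else Real.log (1 / η) - 1 + η / x

private lemma basic_summable' : Summable (fun k : ℕ => (1:ℝ)/((k:ℝ)+1)^2) := by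
  have := (summable_nat_add_iff (f := fun n : ℕ => 1/(n:ℝ)^2) 1).mpr
    (summable_one_div_nat_pow.mpr one_lt_two)
  exact this.congr (by intro k; push_cast; ring_nf)

private lemma shift_summable' (n : ℕ) : Summable (fun k : ℕ => (1:ℝ)/((k:ℝ)+n+1)^2) := by
  have := (summable_nat_add_iff (f := fun k : ℕ => (1:ℝ)/((k:ℝ)+1)^2) n).mpr basic_summable'
  exact this.congr (by intro k; push_cast; ring_nf)

private lemma tail_bound' (n : ℕ) (hn : 0 < n) :
    (∑' k : ℕ, (1:ℝ)/((k:ℝ)+n+1)^2) ≤ 1/(n:ℝ) := by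
  apply Real.tsum_le_of_sum_range_le (fun k => by positivity)
  intro m
  have hn1 : (1:ℝ) ≤ (n:ℝ) := by exact_mod_cast hn
  have key : ∀ k : ℕ, (1:ℝ)/((k:ℝ)+n+1)^2 ≤ 1/((k:ℝ)+n) - 1/((k:ℝ)+n+1) := by
    intro k
    have h0 : (0:ℝ) < (k:ℝ)+n := by positivity
    have h1 : (0:ℝ) < (k:ℝ)+n+1 := by linarith
    rw [div_sub_div _ _ (ne_of_gt h0) (ne_of_gt h1),
      div_le_div_iff₀ (by positivity) (by positivity)]
    nlinarith [sq_nonneg ((k:ℝ)+n)]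
  have tele : ∑ k ∈ Finset.range m, ((1:ℝ)/((k:ℝ)+n) - 1/((k:ℝ)+n+1))
      = 1/((0:ℝ)+n) - 1/((m:ℝ)+n) := by
    rw [show (∑ k ∈ Finset.range m, ((1:ℝ)/((k:ℝ)+n) - 1/((k:ℝ)+n+1)))
        = ∑ k ∈ Finset.range m, ((fun i : ℕ => (1:ℝ)/((i:ℝ)+n)) k
            - (fun i : ℕ => (1:ℝ)/((i:ℝ)+n)) (k+1)) from
      Finset.sum_congr rfl (fun k _ => by push_cast; ring_nf)]
    rw [Finset.sum_range_sub' (fun i : ℕ => (1:ℝ)/((i:ℝ)+n)) m]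
    norm_num
  calc ∑ k ∈ Finset.range m, (1:ℝ)/((k:ℝ)+n+1)^2
      ≤ ∑ k ∈ Finset.range m, ((1:ℝ)/((k:ℝ)+n) - 1/((k:ℝ)+n+1)) :=
        Finset.sum_le_sum (fun k _ => key k)
    _ = 1/((0:ℝ)+n) - 1/((m:ℝ)+n) := tele
    _ ≤ 1/(n:ℝ) := by
        have : (0:ℝ) ≤ 1/((m:ℝ)+n) := by positivity
        rw [zero_add]; linarith

private lemma basic_two' : (∑' k : ℕ, (1:ℝ)/((k:ℝ)+1)^2) ≤ 2 := by
  rw [← Summable.sum_add_tsum_nat_add 1 basic_summable']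
  have h1 : (∑' k : ℕ, (1:ℝ)/((↑(k+1):ℝ)+1)^2) = ∑' k : ℕ, (1:ℝ)/((k:ℝ)+(1:ℕ)+1)^2 :=
    tsum_congr (fun k => by push_cast; ring_nf)
  have h2 := tail_bound' 1 one_pos
  simp only [Finset.sum_range_one, Nat.cast_zero] at *
  norm_num at *
  linarith

private lemma sin_diff_le' (a b : ℝ) : |Real.sin a - Real.sin b| ≤ |a - b| := by
  rw [Real.sin_sub_sin, abs_mul, abs_mul, abs_two]
  have h1 : |Real.sin ((a-b)/2)| ≤ |a-b|/2 := by
    have := Real.abs_sin_le_abs (x := (a-b)/2)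
    rwa [abs_div, abs_two] at this
  calc 2 * |Real.sin ((a-b)/2)| * |Real.cos ((a+b)/2)| ≤ 2 * (|a-b|/2) * 1 := by
        gcongr
        exact Real.abs_cos_le_one _
    _ = |a-b| := by ring

/-- Non-Lipschitz modulus-of-continuity estimate for `f(t,x) = λ(t)·∑_{k≥1} sin(kx)/k²`:
for `0 < η < 1/e` there is `C > 0` such that for all `x ≠ y`, the series
`∑_{k≥1} (sin(kx) − sin(ky))/k²` converges absolutely and its sum is bounded in
absolute value by `C·|x−y|·κ̃₁(|x−y|)`. -/
theorem sum_sin_diff_div_sq_le (η : ℝ) (hη₀ : 0 < η) (hη₁ : η < 1 / Real.exp 1) :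
    ∃ C : ℝ, 0 < C ∧ ∀ x y : ℝ, x ≠ y →
      Summable (fun k : ℕ =>
        |Real.sin ((k + 1 : ℝ) * x) - Real.sin ((k + 1 : ℝ) * y)| / ((k : ℝ) + 1) ^ 2) ∧
      |∑' k : ℕ, (Real.sin ((k + 1 : ℝ) * x) - Real.sin ((k + 1 : ℝ) * y)) / ((k : ℝ) + 1) ^ 2| ≤
        C * |x - y| * kappa1 η |x - y| := by
  have hexp1 : (1:ℝ) < Real.exp 1 := by
    have := Real.add_one_le_exp 1
    nlinarith [Real.exp_pos 1]
  have hηe : η * Real.exp 1 < 1 := by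
    rw [lt_div_iff₀ (Real.exp_pos 1)] at hη₁; linarith
  refine ⟨5 + 4/η, by positivity, fun x y hxy => ?_⟩
  set d : ℝ := |x - y| with hd_def
  have hd : 0 < d := abs_pos.mpr (sub_ne_zero.mpr hxy)
  set g : ℕ → ℝ := fun k => min 2 (((k:ℝ)+1)*d) / ((k:ℝ)+1)^2 with hg_def
  -- pointwise bound
  have habs' : ∀ k : ℕ,
      |Real.sin ((k + 1 : ℝ) * x) - Real.sin ((k + 1 : ℝ) * y)| ≤ min 2 (((k:ℝ)+1)*d) := by
    intro k
    refine le_min ?_ ?_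
    · have h1 := Real.neg_one_le_sin ((k + 1 : ℝ) * x)
      have h2 := Real.sin_le_one ((k + 1 : ℝ) * x)
      have h3 := Real.neg_one_le_sin ((k + 1 : ℝ) * y)
      have h4 := Real.sin_le_one ((k + 1 : ℝ) * y)
      rw [abs_le]; constructor <;> linarith
    · calc |Real.sin ((k + 1 : ℝ) * x) - Real.sin ((k + 1 : ℝ) * y)|
          ≤ |(k + 1 : ℝ) * x - (k + 1 : ℝ) * y| := sin_diff_le' _ _
        _ = ((k:ℝ)+1) * d := by
            rw [← mul_sub, abs_mul, abs_of_pos (by positivity : (0:ℝ) < (k:ℝ)+1)]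
  have habs : ∀ k : ℕ,
      |Real.sin ((k + 1 : ℝ) * x) - Real.sin ((k + 1 : ℝ) * y)| / ((k : ℝ) + 1) ^ 2 ≤ g k := by
    intro k
    have h := habs' k
    have hden : (0:ℝ) < ((k:ℝ)+1)^2 := by positivity
    exact div_le_div_of_nonneg_right h hden.le |>.trans_eq rfl
  have hg_nonneg : ∀ k, 0 ≤ g k := fun k =>
    div_nonneg (le_min (by norm_num) (by positivity)) (by positivity)
  have hg_le : ∀ k : ℕ, g k ≤ 2/((k:ℝ)+1)^2 := fun k => by
    apply div_le_div_of_nonneg_right (min_le_left _ _) (by positivity)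
  have h2summ : Summable (fun k : ℕ => 2/((k:ℝ)+1)^2) :=
    (basic_summable'.mul_left 2).congr (fun k => mul_one_div 2 _)
  have hg_summable : Summable g := Summable.of_nonneg_of_le hg_nonneg hg_le h2summ
  have hsum1 : Summable (fun k : ℕ =>
      |Real.sin ((k + 1 : ℝ) * x) - Real.sin ((k + 1 : ℝ) * y)| / ((k : ℝ) + 1) ^ 2) :=
    Summable.of_nonneg_of_le (fun k => by positivity) habs hg_summable
  refine ⟨hsum1, ?_⟩
  have hfabs : ∀ k : ℕ,
      |(Real.sin ((k + 1 : ℝ) * x) - Real.sin ((k + 1 : ℝ) * y)) / ((k : ℝ) + 1) ^ 2|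
        = |Real.sin ((k + 1 : ℝ) * x) - Real.sin ((k + 1 : ℝ) * y)| / ((k : ℝ) + 1) ^ 2 := by
    intro k
    rw [abs_div, abs_of_pos (by positivity : (0:ℝ) < ((k:ℝ)+1)^2)]
  have hf_abs_summ : Summable (fun k : ℕ =>
      |(Real.sin ((k + 1 : ℝ) * x) - Real.sin ((k + 1 : ℝ) * y)) / ((k : ℝ) + 1) ^ 2|) :=
    hsum1.congr (fun k => (hfabs k).symm)
  -- the main estimate on ∑' g
  have hκbound : (∑' k, g k) ≤ (5 + 4/η) * d * kappa1 η d := by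
    by_cases hdη : d ≤ η
    · -- small d : kappa = log(1/d)
      rw [kappa1, if_pos hdη]
      have hde : d * Real.exp 1 < 1 := by nlinarith
      have hd1 : d < 1 := by nlinarith
      have h1d : (1:ℝ) ≤ 1/d := by rw [le_div_iff₀ hd]; linarith
      have hL : 1 ≤ Real.log (1/d) := by
        have hlogd : Real.log d ≤ -1 := by
          rw [Real.log_le_iff_le_exp hd, Real.exp_neg]
          have h1 : (1:ℝ)/Real.exp 1 = (Real.exp 1)⁻¹ := one_div _
          linarith
        rw [one_div, Real.log_inv]; linarith
      set L := Real.log (1/d) with hLdef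
      have hLd : L = -Real.log d := by rw [hLdef, one_div, Real.log_inv]
      set N := ⌈1/d⌉₊ with hN
      have hN0 : 0 < N := Nat.ceil_pos.mpr (by positivity)
      have hN0' : (1:ℝ) ≤ (N:ℝ) := by exact_mod_cast hN0
      have hNge : 1/d ≤ (N:ℝ) := Nat.le_ceil _
      have hNle : (N:ℝ) ≤ 2/d := by
        have h1 : (⌈1/d⌉₊:ℝ) < 1/d + 1 := Nat.ceil_lt_add_one (by positivity)
        have h2 : 2/d = 1/d + 1/d := by ring
        rw [← hN] at h1
        linarith
      rw [← Summable.sum_add_tsum_nat_add N hg_summable]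
      have head : ∑ k ∈ Finset.range N, g k ≤ d * (1 + Real.log N) := by
        have hterm : ∀ k ∈ Finset.range N, g k ≤ d * ((k:ℝ)+1)⁻¹ := by
          intro k _
          calc g k ≤ (((k:ℝ)+1)*d)/((k:ℝ)+1)^2 :=
                div_le_div_of_nonneg_right (min_le_right _ _) (by positivity)
            _ = d * ((k:ℝ)+1)⁻¹ := by
                field_simp
        have hharm : (harmonic N : ℝ) = ∑ k ∈ Finset.range N, ((k:ℝ)+1)⁻¹ := by
          rw [harmonic]
          push_cast
          rfl
        calc ∑ k ∈ Finset.range N, g k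
            ≤ ∑ k ∈ Finset.range N, d * ((k:ℝ)+1)⁻¹ := Finset.sum_le_sum hterm
          _ = d * ∑ k ∈ Finset.range N, ((k:ℝ)+1)⁻¹ := by rw [Finset.mul_sum]
          _ = d * (harmonic N : ℝ) := by rw [hharm]
          _ ≤ d * (1 + Real.log N) :=
              mul_le_mul_of_nonneg_left (harmonic_le_one_add_log N) hd.le
      have hlogN : Real.log N ≤ Real.log 2 + L := by
        have h1 : Real.log N ≤ Real.log (2/d) := Real.log_le_log (by positivity) hNle
        rw [Real.log_div (by norm_num) (ne_of_gt hd)] at h1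
        linarith [hLd]
      have tail : (∑' k : ℕ, g (k+N)) ≤ 2*d := by
        have hsh : Summable (fun k : ℕ => g (k+N)) := (summable_nat_add_iff N).mpr hg_summable
        have hb : ∀ k : ℕ, g (k+N) ≤ 2 * ((1:ℝ)/((k:ℝ)+N+1)^2) := by
          intro k
          calc g (k+N) ≤ 2/((↑(k+N):ℝ)+1)^2 := hg_le (k+N)
            _ = 2 * ((1:ℝ)/((k:ℝ)+N+1)^2) := by push_cast; ring
        have hs2 : Summable (fun k : ℕ => 2 * ((1:ℝ)/((k:ℝ)+N+1)^2)) :=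
          (shift_summable' N).mul_left 2
        have h1N : 1/(N:ℝ) ≤ d := by
          rw [div_le_iff₀ (by positivity)]
          have : d * (1/d) ≤ d * (N:ℝ) := mul_le_mul_of_nonneg_left hNge hd.le
          rw [mul_one_div, div_self (ne_of_gt hd)] at this
          linarith
        calc (∑' k : ℕ, g (k+N)) ≤ ∑' k : ℕ, 2 * ((1:ℝ)/((k:ℝ)+N+1)^2) :=
              Summable.tsum_le_tsum hb hsh hs2
          _ = 2 * ∑' k : ℕ, (1:ℝ)/((k:ℝ)+N+1)^2 := tsum_mul_left
          _ ≤ 2 * (1/(N:ℝ)) := by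
              have := tail_bound' N hN0
              linarith
          _ ≤ 2 * d := by linarith
      have hlog2 : Real.log 2 ≤ 1 := by
        have := Real.log_le_sub_one_of_pos (by norm_num : (0:ℝ) < 2)
        linarith
      have h4η : (0:ℝ) ≤ 4/η := by positivity
      have hdL : 0 ≤ d * L := mul_nonneg hd.le (by linarith)
      calc ∑ k ∈ Finset.range N, g k + ∑' k : ℕ, g (k+N)
          ≤ d * (1 + Real.log N) + 2*d := add_le_add head tail
        _ ≤ d * (1 + (Real.log 2 + L)) + 2*d := by nlinarith
        _ ≤ 5 * (d * L) := by nlinarith [mul_nonneg hd.le (sub_nonneg.mpr hL)]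
        _ ≤ (5 + 4/η) * d * L := by nlinarith
    · -- large d : kappa = log(1/η) - 1 + η/d
      rw [kappa1, if_neg hdη]
      push_neg at hdη
      have hLη : 1 ≤ Real.log (1/η) := by
        have hlogd : Real.log η ≤ -1 := by
          rw [Real.log_le_iff_le_exp hη₀, Real.exp_neg]
          have h1 : (1:ℝ)/Real.exp 1 = (Real.exp 1)⁻¹ := one_div _
          linarith
        rw [one_div, Real.log_inv]; linarith
      have hsum4 : (∑' k, g k) ≤ 4 := by
        calc (∑' k, g k) ≤ ∑' k : ℕ, 2/((k:ℝ)+1)^2 := Summable.tsum_le_tsum hg_le hg_summable h2summ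
          _ = 2 * ∑' k : ℕ, (1:ℝ)/((k:ℝ)+1)^2 := by
              rw [← tsum_mul_left]
              exact tsum_congr (fun k => (mul_one_div 2 _).symm)
          _ ≤ 4 := by have := basic_two'; linarith
      set κ := Real.log (1/η) - 1 + η/d with hκdef
      have hηd : η/d ≤ κ := by rw [hκdef]; linarith
      have hdκ : η ≤ d * κ := by
        have h1 : d * (η/d) ≤ d * κ := mul_le_mul_of_nonneg_left hηd hd.le
        rw [mul_div_cancel₀ η (ne_of_gt hd)] at h1
        exact h1
      have h4 : (4/η)*η = 4 := div_mul_cancel₀ 4 (ne_of_gt hη₀)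
      have hC : (0:ℝ) < 5 + 4/η := by positivity
      calc (∑' k, g k) ≤ 4 := hsum4
        _ ≤ (5 + 4/η) * d * κ := by
            have h5 : (5 + 4/η) * η ≤ (5 + 4/η) * (d * κ) :=
              mul_le_mul_of_nonneg_left hdκ hC.le
            nlinarith
  -- conclude
  calc |∑' k : ℕ, (Real.sin ((k + 1 : ℝ) * x) - Real.sin ((k + 1 : ℝ) * y)) / ((k : ℝ) + 1) ^ 2|
      ≤ ∑' k : ℕ,
        |Real.sin ((k + 1 : ℝ) * x) - Real.sin ((k + 1 : ℝ) * y)| / ((k : ℝ) + 1) ^ 2 := by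
        have := norm_tsum_le_tsum_norm (f := fun k : ℕ =>
          (Real.sin ((k + 1 : ℝ) * x) - Real.sin ((k + 1 : ℝ) * y)) / ((k : ℝ) + 1) ^ 2)
          (by simpa [Real.norm_eq_abs] using hsum1)
        simpa [Real.norm_eq_abs] using this
    _ ≤ ∑' k, g k := Summable.tsum_le_tsum habs hsum1 hg_summable
    _ ≤ (5 + 4/η) * d * kappa1 η d := hκbound
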